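/- Let k be even. The polynomial P = ∑_{σ ∈ S_{2k}} sgn(σ) · x_{σ(1)...σ(k)} · x_{σ(k+1)...σ(2k)} · x_{1...k} in the Plücker variables x_{a₁...a_k} (skew-symmetric in their indices) does not vanish at the point Q = e₁∧...∧e_k + e_{k+1}∧...∧e_{2k}; specifically P(Q) is a nonzero multiple of the evaluation of the single monomial x_{1...k}² x_{k+1...2k}, and in particular P(Q) ≠ 0. -/

import Mathlib

open Finset

/-- The evaluation at `Q = e₁∧…∧e_k + e_{k+1}∧…∧e_{2k} ∈ Λ^k ℂ^{2k}` of the alternating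
Plücker variable `x_{a₁…a_k}`: it is the dual pairing
`⟨e*_{a₁}∧…∧e*_{a_k}, Q⟩`, i.e. the sum of the two determinants of 0/1 matrices recording
whether the index tuple `a` matches the first or the second block of basis vectors
(this is alternating in the indices `a₁,…,a_k` and picks out, with sign, the variables
`x_{1…k}` and `x_{k+1…2k}`). -/
noncomputable def coordQ (k : ℕ) (a : Fin k → Fin (2 * k)) : ℂ :=
  (Matrix.of fun i j : Fin k => if (a j : ℕ) = (i : ℕ) then (1 : ℂ) else 0).det +
    (Matrix.of fun i j : Fin k => if (a j : ℕ) = k + (i : ℕ) then (1 : ℂ) else 0).det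

namespace HWAux

open Equiv Matrix

lemma det_perm_mat (n : ℕ) (σ : Equiv.Perm (Fin n)) :
    (Matrix.of fun i j : Fin n => if σ j = i then (1:ℂ) else 0).det
      = ((Equiv.Perm.sign σ : ℤ) : ℂ) := by
  have h : (Matrix.of fun i j : Fin n => if σ j = i then (1:ℂ) else 0) = (σ⁻¹).permMatrix ℂ := by
    ext i j
    simp only [Matrix.of_apply, Equiv.Perm.permMatrix, PEquiv.toMatrix_apply,
      Equiv.toPEquiv_apply, Option.mem_def, Option.some_inj, Equiv.Perm.inv_def]
    by_cases h : σ j = i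
    · rw [if_pos (show σ.symm i = j by rw [← h, Equiv.symm_apply_apply]), if_pos h]
    · rw [if_neg h, if_neg (fun hc => h (by rw [← hc, Equiv.apply_symm_apply]))]
  rw [h, Matrix.det_permutation]
  simp

lemma coordQ_low {k : ℕ} (hk : 0 < k) (a : Fin k → Fin (2*k))
    (ha : ∀ i, (a i : ℕ) = (i : ℕ)) : coordQ k a = 1 := by
  have hne : Nonempty (Fin k) := ⟨⟨0, hk⟩⟩
  unfold coordQ
  have h1 : (Matrix.of fun i j : Fin k => if (a j : ℕ) = (i:ℕ) then (1:ℂ) else 0) = 1 := by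
    ext i j
    rw [Matrix.of_apply, ha, Matrix.one_apply]
    by_cases h : i = j
    · rw [if_pos (by rw [h]), if_pos h]
    · rw [if_neg (fun hc => h (Fin.ext hc.symm)), if_neg h]
  have h2 : (Matrix.of fun i j : Fin k => if (a j : ℕ) = k + (i:ℕ) then (1:ℂ) else 0) = 0 := by
    ext i j
    rw [Matrix.of_apply, ha, if_neg (by have := j.isLt; omega)]
    simp
  rw [h1, h2, Matrix.det_one, Matrix.det_zero, add_zero]

lemma coordQ_high {k : ℕ} (hk : 0 < k) (a : Fin k → Fin (2*k))
    (ha : ∀ i, (a i : ℕ) = k + (i : ℕ)) : coordQ k a = 1 := by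
  have hne : Nonempty (Fin k) := ⟨⟨0, hk⟩⟩
  unfold coordQ
  have h1 : (Matrix.of fun i j : Fin k => if (a j : ℕ) = (i:ℕ) then (1:ℂ) else 0) = 0 := by
    ext i j
    rw [Matrix.of_apply, ha, if_neg (by have := i.isLt; omega)]
    simp
  have h2 : (Matrix.of fun i j : Fin k => if (a j : ℕ) = k + (i:ℕ) then (1:ℂ) else 0) = 1 := by
    ext i j
    rw [Matrix.of_apply, ha, Matrix.one_apply]
    by_cases h : i = j
    · rw [if_pos (by rw [h]), if_pos h]
    · rw [if_neg (fun hc => h (Fin.ext (by omega))), if_neg h]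
  rw [h1, h2, Matrix.det_zero, Matrix.det_one, zero_add]

lemma coordQ_mixed {k : ℕ} (a : Fin k → Fin (2*k)) (j1 j2 : Fin k)
    (hj1 : k ≤ (a j1 : ℕ)) (hj2 : (a j2 : ℕ) < k) : coordQ k a = 0 := by
  unfold coordQ
  rw [Matrix.det_eq_zero_of_column_eq_zero j1
      (fun i => by rw [Matrix.of_apply, if_neg (by have := i.isLt; omega)]),
    Matrix.det_eq_zero_of_column_eq_zero j2
      (fun i => by rw [Matrix.of_apply, if_neg (by omega)]),
    add_zero]

lemma finRotate_pow_val (n m : ℕ) (x : Fin (n+1)) :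
    ((((finRotate (n+1))^m) x : Fin (n+1)) : ℕ) = ((x:ℕ) + m) % (n+1) := by
  induction m generalizing x with
  | zero => simp [Nat.mod_eq_of_lt x.isLt]
  | succ m ih =>
    rw [pow_succ, Equiv.Perm.mul_apply, ih, finRotate_succ_apply]
    have h1 : (((x + 1 : Fin (n+1)) : ℕ)) = ((x:ℕ) + 1) % (n+1) := by
      rw [Fin.add_def]
      simp [Nat.add_mod]
    rw [h1, Nat.mod_add_mod]
    congr 1
    omega

lemma sign_shift {n : ℕ} (hn : 0 < n) (K : ℕ) (w : Equiv.Perm (Fin n))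
    (hw : ∀ x, ((w x : Fin n) : ℕ) = ((x:ℕ) + K) % n) :
    Equiv.Perm.sign w = (-1)^((n-1)*K) := by
  obtain ⟨m, rfl⟩ : ∃ m, n = m + 1 := ⟨n-1, by omega⟩
  have hwr : w = (finRotate (m+1))^K := by
    ext x
    rw [hw, finRotate_pow_val]
  rw [hwr, map_pow, sign_finRotate, ← pow_mul]

/-- The key lemma: each summand is `0` or `1`. -/
lemma key {k : ℕ} (hk : 0 < k) (hke : Even k) (h1 : k ≤ 2*k)
    (h2 : ∀ i : Fin k, k + (i:ℕ) < 2*k) (σ : Equiv.Perm (Fin (2*k))) :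
    (((Equiv.Perm.sign σ : ℤ) : ℂ) *
        coordQ k (fun i => σ (Fin.castLE h1 i)) *
        coordQ k (fun i => σ ⟨k + (i : ℕ), h2 i⟩) = 0) ∨
    (((Equiv.Perm.sign σ : ℤ) : ℂ) *
        coordQ k (fun i => σ (Fin.castLE h1 i)) *
        coordQ k (fun i => σ ⟨k + (i : ℕ), h2 i⟩) = 1) := by
  have hne : Nonempty (Fin k) := ⟨⟨0, hk⟩⟩
  set a : Fin k → Fin (2*k) := fun i => σ (Fin.castLE h1 i) with ha_def
  set b : Fin k → Fin (2*k) := fun i => σ ⟨k + (i : ℕ), h2 i⟩ with hb_def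
  have hab : ∀ i j, a i ≠ b j := by
    intro i j hc
    have := σ.injective hc
    have : (Fin.castLE h1 i : ℕ) = k + (j:ℕ) := by rw [this]
    simp at this
    omega
  set s : ℂ := ((Equiv.Perm.sign σ : ℤ) : ℂ) with hs_def
  have hss : s * s = 1 := by
    rw [hs_def]
    rcases Int.units_eq_one_or (Equiv.Perm.sign σ) with h | h <;> rw [h] <;> norm_num
  -- the big permutation matrix
  set M : Matrix (Fin (2*k)) (Fin (2*k)) ℂ :=
    Matrix.of fun i j => if σ j = i then (1:ℂ) else 0 with hM_def
  have hdetM : M.det = s := det_perm_mat (2*k) σ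
  set e : Fin k ⊕ Fin k ≃ Fin (2*k) := finSumFinEquiv.trans (finCongr (two_mul k).symm)
    with he_def
  have he1 : ∀ i : Fin k, e (Sum.inl i) = Fin.castLE h1 i := by
    intro i
    apply Fin.ext
    simp [he_def]
  have he2 : ∀ i : Fin k, e (Sum.inr i) = (⟨k + (i:ℕ), h2 i⟩ : Fin (2*k)) := by
    intro i
    apply Fin.ext
    simp [he_def]
    omega
  set A : Matrix (Fin k) (Fin k) ℂ :=
    Matrix.of fun i j => if (a j : ℕ) = (i:ℕ) then (1:ℂ) else 0 with hA_def
  set B : Matrix (Fin k) (Fin k) ℂ :=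
    Matrix.of fun i j => if (b j : ℕ) = (i:ℕ) then (1:ℂ) else 0 with hB_def
  set C : Matrix (Fin k) (Fin k) ℂ :=
    Matrix.of fun i j => if (a j : ℕ) = k + (i:ℕ) then (1:ℂ) else 0 with hC_def
  set D : Matrix (Fin k) (Fin k) ℂ :=
    Matrix.of fun i j => if (b j : ℕ) = k + (i:ℕ) then (1:ℂ) else 0 with hD_def
  have hcoA : coordQ k a = A.det + C.det := rfl
  have hcoB : coordQ k b = B.det + D.det := rfl
  have hsub : M.submatrix e e = Matrix.fromBlocks A B C D := by
    ext i j
    rcases i with i | i <;> rcases j with j | j <;>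
      rw [Matrix.submatrix_apply] <;>
      simp only [he1, he2, hM_def, Matrix.of_apply, Matrix.fromBlocks_apply₁₁,
        Matrix.fromBlocks_apply₁₂, Matrix.fromBlocks_apply₂₁, Matrix.fromBlocks_apply₂₂,
        hA_def, hB_def, hC_def, hD_def, ha_def, hb_def] <;>
      first
        | rfl
        | exact if_congr (by simp [Fin.ext_iff]) rfl rfl
  have hdet2 : (Matrix.fromBlocks A B C D).det = s := by
    rw [← hsub, Matrix.det_submatrix_equiv_self, hdetM]
  by_cases hlow : ∀ j, (a j : ℕ) < k
  · -- block-preserving case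
    right
    have hinj : Function.Injective (fun j : Fin k => (⟨(a j : ℕ), hlow j⟩ : Fin k)) := by
      intro i j hij
      have : a i = a j := Fin.ext (by simpa [Fin.ext_iff] using hij)
      have := σ.injective this
      simpa [Fin.ext_iff] using this
    have hsurj := Finite.injective_iff_surjective.mp hinj
    have hbhigh : ∀ j, k ≤ (b j : ℕ) := by
      intro j
      by_contra hc
      push_neg at hc
      obtain ⟨i, hi⟩ := hsurj ⟨(b j : ℕ), hc⟩
      exact hab i j (Fin.ext (by simpa [Fin.ext_iff] using hi))
    have hC0 : C = 0 := by
      ext i j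
      rw [hC_def, Matrix.of_apply, if_neg (by have := hlow j; omega)]
      simp
    have hB0 : B = 0 := by
      ext i j
      rw [hB_def, Matrix.of_apply, if_neg (by have := hbhigh j; have := i.isLt; omega)]
      simp
    have hAD : A.det * D.det = s := by
      rw [← hdet2, hC0, Matrix.det_fromBlocks_zero₂₁]
    rw [hcoA, hcoB, hC0, hB0, Matrix.det_zero, add_zero, zero_add]
    calc s * A.det * D.det = s * (A.det * D.det) := by ring
    _ = s * s := by rw [hAD]
    _ = 1 := hss
  by_cases hhigh : ∀ j, k ≤ (a j : ℕ)
  · -- block-swapping case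
    right
    have hinj : Function.Injective
        (fun j : Fin k => (⟨(a j : ℕ) - k, by have := (a j).isLt; omega⟩ : Fin k)) := by
      intro i j hij
      have hv : (a i : ℕ) = (a j : ℕ) := by
        have h1 := hhigh i; have h2 := hhigh j
        simp only [Fin.mk.injEq] at hij
        omega
      have := σ.injective (Fin.ext hv : a i = a j)
      simpa [Fin.ext_iff] using this
    have hsurj := Finite.injective_iff_surjective.mp hinj
    have hblow : ∀ j, (b j : ℕ) < k := by
      intro j
      by_contra hc
      push_neg at hc
      obtain ⟨i, hi⟩ := hsurj ⟨(b j : ℕ) - k, by have := (b j).isLt; omega⟩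
      simp only [Fin.mk.injEq] at hi
      have := hhigh i
      exact hab i j (Fin.ext (by omega))
    have hA0 : A = 0 := by
      ext i j
      rw [hA_def, Matrix.of_apply, if_neg (by have := hhigh j; have := i.isLt; omega)]
      simp
    have hD0 : D = 0 := by
      ext i j
      rw [hD_def, Matrix.of_apply, if_neg (by have := hblow j; omega)]
      simp
    -- sign of the block swap
    set τ : Equiv.Perm (Fin k ⊕ Fin k) := Equiv.sumComm (Fin k) (Fin k) with hτ_def
    set w : Equiv.Perm (Fin (2*k)) := ((e.symm.trans τ).trans e : Fin (2*k) ≃ Fin (2*k))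
      with hw_def
    have hsignτ : Equiv.Perm.sign τ = 1 := by
      have heq : Equiv.Perm.sign τ = Equiv.Perm.sign w := by
        apply Equiv.Perm.sign_eq_sign_of_equiv τ w e
        intro x
        simp [hw_def]
      rw [heq, sign_shift (by omega : 0 < 2*k) k w, Even.neg_one_pow]
      · exact (Nat.even_mul).mpr (Or.inr hke)
      · intro x
        rcases hx : e.symm x with i | i
        · have hxe : x = e (Sum.inl i) := by rw [← hx, Equiv.apply_symm_apply]
          rw [hxe]
          simp only [hw_def, Equiv.trans_apply, Equiv.symm_apply_apply, hτ_def,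
            Equiv.sumComm_apply, Sum.swap_inl]
          rw [he1, he2]
          have hcl : ((Fin.castLE h1 i : Fin (2*k)) : ℕ) = (i:ℕ) := rfl
          rw [Nat.mod_eq_of_lt (by rw [hcl]; have := i.isLt; omega), hcl]
          exact Nat.add_comm k (i:ℕ)
        · have hxe : x = e (Sum.inr i) := by rw [← hx, Equiv.apply_symm_apply]
          rw [hxe]
          simp only [hw_def, Equiv.trans_apply, Equiv.symm_apply_apply, hτ_def,
            Equiv.sumComm_apply, Sum.swap_inr]
          rw [he1, he2]
          have hcl : ((Fin.castLE h1 i : Fin (2*k)) : ℕ) = (i:ℕ) := rfl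
          have h3 : ((⟨k + (i:ℕ), h2 i⟩ : Fin (2*k)) : ℕ) + k = (i:ℕ) + 2*k := by
            show k + (i:ℕ) + k = (i:ℕ) + 2*k
            omega
          rw [h3, Nat.add_mod_right, hcl, Nat.mod_eq_of_lt (by have := i.isLt; omega)]
    have hperm : ((Matrix.fromBlocks A B C D).submatrix τ id).det
        = ((Equiv.Perm.sign τ : ℤ) : ℂ) * (Matrix.fromBlocks A B C D).det :=
      Matrix.det_permute τ _
    have hsubτ : (Matrix.fromBlocks A B C D).submatrix (⇑τ) id
        = Matrix.fromBlocks C D A B := by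
      ext i j
      rcases i with i | i <;> rcases j with j | j <;>
        simp [hτ_def]
    have hCB : C.det * B.det = s := by
      have h3 : (Matrix.fromBlocks C D A B).det = (Matrix.fromBlocks A B C D).det := by
        rw [← hsubτ, hperm, hsignτ]
        simp
      rw [← hdet2, ← h3, hD0, hA0, Matrix.det_fromBlocks_zero₂₁]
    rw [hcoA, hcoB, hA0, hD0, Matrix.det_zero, add_zero, zero_add]
    calc s * C.det * B.det = s * (C.det * B.det) := by ring
    _ = s * s := by rw [hCB]
    _ = 1 := hss
  · -- mixed case
    left
    push_neg at hlow hhigh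
    obtain ⟨j1, hj1⟩ := hlow
    obtain ⟨j2, hj2⟩ := hhigh
    rw [coordQ_mixed a j1 j2 (by omega) (by omega)]
    ring

end HWAux

/-- for `k` even, the cubic
`P = ∑_{σ ∈ S_{2k}} sgn(σ) x_{σ(1)…σ(k)} x_{σ(k+1)…σ(2k)} x_{1…k}` does not vanish at
`Q = e₁∧…∧e_k + e_{k+1}∧…∧e_{2k}`. -/
theorem highest_weight_cubic_nonzero_even (k : ℕ) (hk : 0 < k) (hke : Even k) :
    (∑ σ : Equiv.Perm (Fin (2 * k)),
        ((Equiv.Perm.sign σ : ℤ) : ℂ) *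
          coordQ k (fun i => σ (Fin.castLE (by omega) i)) *
          coordQ k (fun i => σ ⟨k + (i : ℕ), by have := i.isLt; omega⟩) *
          coordQ k (fun i => Fin.castLE (by omega) i)) ≠ 0 := by
  classical
  have h1 : k ≤ 2*k := by omega
  have h2 : ∀ i : Fin k, k + (i:ℕ) < 2*k := fun i => by have := i.isLt; omega
  have hbase : coordQ k (fun i : Fin k => Fin.castLE h1 i) = 1 :=
    HWAux.coordQ_low hk _ (fun i => rfl)
  set body : Equiv.Perm (Fin (2*k)) → ℂ := fun σ =>
    ((Equiv.Perm.sign σ : ℤ) : ℂ) *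
      coordQ k (fun i => σ (Fin.castLE h1 i)) *
      coordQ k (fun i => σ ⟨k + (i : ℕ), h2 i⟩) *
      coordQ k (fun i => Fin.castLE h1 i) with hbody_def
  have hkey : ∀ σ, body σ = 0 ∨ body σ = 1 := by
    intro σ
    rcases HWAux.key hk hke h1 h2 σ with h | h <;>
      [left; right] <;> rw [hbody_def] <;> simp only [hbase, mul_one] <;> exact h
  have hone : body 1 = 1 := by
    rw [hbody_def]
    simp only
    rw [hbase, HWAux.coordQ_low hk _ (fun i => by simp),
      HWAux.coordQ_high hk _ (fun i => by simp)]
    simp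
  have hsum : (∑ σ : Equiv.Perm (Fin (2 * k)), body σ)
      = ((Finset.univ.filter (fun σ => body σ = 1)).card : ℂ) := by
    rw [← Finset.sum_boole]
    apply Finset.sum_congr rfl
    intro σ _
    rcases hkey σ with h | h <;> simp [h]
  show (∑ σ : Equiv.Perm (Fin (2 * k)), body σ) ≠ 0
  rw [hsum]
  rw [Nat.cast_ne_zero]
  exact Finset.card_ne_zero_of_mem (Finset.mem_filter.mpr ⟨Finset.mem_univ 1, hone⟩)
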